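/- arXiv:1212.0839 — 3 statements merged into one kernel-verified Lean document; each statement's English description precedes it below -/
import Mathlib

section
/- The Stieltjes transform m(z) = ∫ ρ_sc(x)/(x−z) dx of the semicircle density ρ_sc(x) = (1/2π)√((4−x²)₊) satisfies the self-consistent equation m(z) + 1/m(z) + z = 0 for every z in the upper half plane, and is given explicitly by m(z) = (−z + √(z²−4))/2 with the branch of the square root chosen so that √(z²−4) ∼ z as z → ∞. -/
open MeasureTheory Complex

/-- The Wigner semicircle density `ρ_sc(x) = (1/(2π))·√((4−x²)₊)`. -/
noncomputable def rhoSC (x : ℝ) : ℝ := (1 / (2 * Real.pi)) * Real.sqrt (max (4 - x ^ 2) 0)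

/-- The Stieltjes transform `m(z) = ∫ ρ_sc(x)/(x−z) dx`. -/
noncomputable def mSC (z : ℂ) : ℂ := ∫ x : ℝ, (rhoSC x : ℂ) / ((x : ℂ) - z)

namespace SCAux

noncomputable def sq4 (x : ℝ) : ℝ := Real.sqrt (4 - x^2)
noncomputable def Wr (y : ℝ) : ℝ := Real.sqrt (4 + y^2)
noncomputable def Af (y x : ℝ) : ℂ :=
  ((4 + 2*sq4 x - (2 + sq4 x)*Wr y : ℝ) : ℂ) - ((x*y : ℝ) : ℂ)*I
noncomputable def Bf (y x : ℝ) : ℂ :=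
  ((x*y : ℝ) : ℂ)*I - ((4 + 2*sq4 x + (2 + sq4 x)*Wr y : ℝ) : ℂ)
noncomputable def Ff (y x : ℝ) : ℂ :=
  ((1/(2*Real.pi) : ℝ) : ℂ) *
    ((sq4 x : ℂ) - (y:ℂ)*I*((Real.arcsin (x/2) : ℝ) : ℂ) + ((Wr y : ℝ) : ℂ) * Complex.log (Af y x / Bf y x))

lemma sq4_nonneg (x : ℝ) : 0 ≤ sq4 x := Real.sqrt_nonneg _

lemma sq4_sq {x : ℝ} (hx : x ∈ Set.Icc (-2:ℝ) 2) : (sq4 x)^2 = 4 - x^2 := by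
  obtain ⟨h1, h2⟩ := hx
  exact Real.sq_sqrt (by nlinarith)

lemma sq4_pos {x : ℝ} (hx : x ∈ Set.Ioo (-2:ℝ) 2) : 0 < sq4 x := by
  obtain ⟨h1, h2⟩ := hx
  exact Real.sqrt_pos.2 (by nlinarith)

lemma sq4_zero : sq4 2 = 0 := by norm_num [sq4]
lemma sq4_zero' : sq4 (-2) = 0 := by norm_num [sq4]
lemma sq4_two : sq4 0 = 2 := by
  rw [sq4]; norm_num

lemma Wr_sq (y : ℝ) : (Wr y)^2 = 4 + y^2 := Real.sq_sqrt (by positivity)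

lemma Wr_gt_two {y : ℝ} (hy : 0 < y) : 2 < Wr y := by
  have h0 : 0 ≤ Wr y := Real.sqrt_nonneg _
  by_contra h
  push_neg at h
  have h4 : (Wr y)^2 ≤ 4 := by nlinarith
  rw [Wr_sq] at h4
  nlinarith

lemma Bf_re (y x : ℝ) : (Bf y x).re = -(4 + 2*sq4 x + (2 + sq4 x)*Wr y) := by
  simp [Bf]

lemma Bf_im (y x : ℝ) : (Bf y x).im = x*y := by simp [Bf]
lemma Af_re (y x : ℝ) : (Af y x).re = 4 + 2*sq4 x - (2 + sq4 x)*Wr y := by simp [Af]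
lemma Af_im (y x : ℝ) : (Af y x).im = -(x*y) := by simp [Af]

lemma Bf_ne_zero {y : ℝ} (hy : 0 < y) (x : ℝ) : Bf y x ≠ 0 := by
  intro h
  have := Bf_re y x
  rw [h] at this
  have h1 := sq4_nonneg x
  have h2 := Wr_gt_two hy
  simp at this
  nlinarith

lemma Af_ne_zero {y : ℝ} (hy : 0 < y) {x : ℝ} (hx : x ∈ Set.Icc (-2:ℝ) 2) : Af y x ≠ 0 := by
  intro h
  have hre := Af_re y x
  have him := Af_im y x
  rw [h] at hre him
  simp at hre him
  rcases him with him | him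
  · -- x = 0
    subst him
    rw [sq4_two] at hre
    have h2 := Wr_gt_two hy
    nlinarith
  · exact absurd him (ne_of_gt hy)

lemma ratio_mem_slitPlane {y : ℝ} (hy : 0 < y) {x : ℝ} (hx : x ∈ Set.Icc (-2:ℝ) 2) :
    Af y x / Bf y x ∈ Complex.slitPlane := by
  have hB := Bf_ne_zero hy x
  have hnormSq : 0 < Complex.normSq (Bf y x) := Complex.normSq_pos.2 hB
  have h2 := Wr_gt_two hy
  have hs := sq4_nonneg x
  rw [Complex.mem_slitPlane_iff]
  rcases eq_or_ne x 0 with hx0 | hx0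
  · left
    subst hx0
    have hre : (Af y 0 / Bf y 0).re = 16*y^2 / Complex.normSq (Bf y 0) := by
      rw [Complex.div_re, Af_re, Af_im, Bf_re, Bf_im, sq4_two, ← add_div]
      congr 1
      linear_combination (16:ℝ) * Wr_sq y
    rw [hre]
    exact div_pos (by nlinarith) hnormSq
  · right
    have him : (Af y x / Bf y x).im =
        (x*y) * (2*(2 + sq4 x)*Wr y) / Complex.normSq (Bf y x) := by
      rw [Complex.div_im, Af_im, Af_re, Bf_re, Bf_im, div_sub_div_same]
      congr 1
      ring
    rw [him]
    exact div_ne_zero (mul_ne_zero (mul_ne_zero hx0 (ne_of_gt hy)) (by positivity)) (ne_of_gt hnormSq)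

theorem keyalg (S W X Y A B : ℂ) (hS : S^2 = 4 - X^2) (hW : W^2 = 4 + Y^2)
    (hA : A = (4 + 2*S - (2+S)*W) - X*Y*I) (hB : B = X*Y*I - (4 + 2*S + (2+S)*W))
    (hS0 : S ≠ 0) (hA0 : A ≠ 0) (hB0 : B ≠ 0) (hxz : X - Y*I ≠ 0) :
    (-X/S) - Y*I*(1/S) + W * (((((2-W)*(-X/S) - Y*I)*B - A*(Y*I - (2+W)*(-X/S)))/B^2)/(A/B)) = S/(X - Y*I) := by
  field_simp
  subst hA hB
  linear_combination ((2)*W^2*X*Y*I + (-4)*Y^2*I^2 + (-1)*W^2*Y^2*I^2 + (-4)*S*X*Y*I + (-8)*X*Y*I + (1)*X^2*Y^2*I^2 + (4)*S^2 + (16)*S + (32) + (-1)*S^2*W^2 + (-4)*S*W^2 + (-8)*W^2) * hS + ((4)*S*X*Y*I + (4)*X^2 + (-1)*X^2*Y^2*I^2 + (8)*X*Y*I + (-16)*S + (-32)) * hW + ((4)*S*X*Y^3*I + (8)*X*Y^3*I + (-1)*X^2*Y^4*I^2 + (-16)*S*Y^2 + (-32)*Y^2 + (4)*X^2*Y^2)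 * Complex.I_sq

lemma hasDerivAt_sq4 {x : ℝ} (hx : x ∈ Set.Ioo (-2:ℝ) 2) :
    HasDerivAt sq4 (-x / sq4 x) x := by
  obtain ⟨h1, h2⟩ := hx
  have hne : 4 - x^2 ≠ 0 := by nlinarith
  have h : HasDerivAt (fun x : ℝ => 4 - x^2) (-(2*x)) x := by
    simpa using ((hasDerivAt_pow 2 x).const_sub 4)
  have := (Real.hasDerivAt_sqrt hne).comp x h
  refine this.congr_deriv ?_
  have hs : Real.sqrt (4 - x^2) > 0 := Real.sqrt_pos.2 (by nlinarith)
  unfold sq4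
  field_simp

lemma hasDerivAt_arcsin_half {x : ℝ} (hx : x ∈ Set.Ioo (-2:ℝ) 2) :
    HasDerivAt (fun x : ℝ => Real.arcsin (x/2)) (1 / sq4 x) x := by
  obtain ⟨h1, h2⟩ := hx
  have hne1 : x/2 ≠ -1 := by intro h; nlinarith [h]
  have hne2 : x/2 ≠ 1 := by intro h; nlinarith [h]
  have h : HasDerivAt (fun x : ℝ => x/2) (1/2) x := (hasDerivAt_id x).div_const 2
  have := (Real.hasDerivAt_arcsin hne1 hne2).comp x h
  refine this.congr_deriv ?_
  have h4 : Real.sqrt (1 - (x/2)^2) = sq4 x / 2 := by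
    rw [sq4, show (1 - (x/2)^2) = (4 - x^2)/4 by ring,
      Real.sqrt_div (by nlinarith) 4, show Real.sqrt 4 = 2 by
        rw [show (4:ℝ) = 2^2 by norm_num, Real.sqrt_sq]; norm_num]
  rw [h4]
  have hs : sq4 x > 0 := Real.sqrt_pos.2 (by nlinarith)
  field_simp

lemma hasDerivAt_Ff {y : ℝ} (hy : 0 < y) {x : ℝ} (hx : x ∈ Set.Ioo (-2:ℝ) 2) :
    HasDerivAt (Ff y)
      (((1/(2*Real.pi) : ℝ) : ℂ) * ((sq4 x : ℝ) : ℂ) / ((x:ℂ) - (y:ℂ)*I)) x := by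
  have hxIcc : x ∈ Set.Icc (-2:ℝ) 2 := Set.mem_Icc_of_Ioo hx
  have hs0 : 0 < sq4 x := sq4_pos hx
  have hsd := hasDerivAt_sq4 hx
  have harc := hasDerivAt_arcsin_half hx
  have hA0 : Af y x ≠ 0 := Af_ne_zero hy hxIcc
  have hB0 : Bf y x ≠ 0 := Bf_ne_zero hy x
  have hslit := ratio_mem_slitPlane hy hxIcc
  -- derivative of Af
  have hre : HasDerivAt (fun t : ℝ => 4 + 2*sq4 t - (2 + sq4 t)*Wr y)
      (2*(-x/sq4 x) - (-x/sq4 x)*Wr y) x :=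
    ((hsd.const_mul 2).const_add 4).sub ((hsd.const_add 2).mul_const (Wr y))
  have him : HasDerivAt (fun t : ℝ => t*y) (1*y) x := (hasDerivAt_id x).mul_const y
  have hA : HasDerivAt (Af y)
      (((2*(-x/sq4 x) - (-x/sq4 x)*Wr y : ℝ) : ℂ) - ((1*y : ℝ) : ℂ)*I) x := by
    unfold Af
    exact (hre.ofReal_comp).sub ((him.ofReal_comp).mul_const I)
  have hre' : HasDerivAt (fun t : ℝ => 4 + 2*sq4 t + (2 + sq4 t)*Wr y)
      (2*(-x/sq4 x) + (-x/sq4 x)*Wr y) x :=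
    ((hsd.const_mul 2).const_add 4).add ((hsd.const_add 2).mul_const (Wr y))
  have hB : HasDerivAt (Bf y)
      (((1*y : ℝ) : ℂ)*I - ((2*(-x/sq4 x) + (-x/sq4 x)*Wr y : ℝ) : ℂ)) x := by
    unfold Bf
    exact ((him.ofReal_comp).mul_const I).sub (hre'.ofReal_comp)
  have hRat := hA.div hB hB0
  have hlog := (hRat.clog_real hslit).const_mul ((Wr y : ℝ) : ℂ)
  have harcC := (harc.ofReal_comp).const_mul ((y:ℂ)*I)
  have hD := ((hsd.ofReal_comp.sub harcC).add hlog).const_mul ((1/(2*Real.pi) : ℝ) : ℂ)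
  have hFf : HasDerivAt (Ff y)
      (((1/(2*Real.pi) : ℝ) : ℂ) *
        (((-x/sq4 x : ℝ) : ℂ) - (y:ℂ)*I*((1/sq4 x : ℝ) : ℂ) +
          ((Wr y : ℝ) : ℂ) *
            (((((2*(-x/sq4 x) - (-x/sq4 x)*Wr y : ℝ) : ℂ) - ((1*y : ℝ) : ℂ)*I) * Bf y x -
                Af y x * (((1*y : ℝ) : ℂ)*I - ((2*(-x/sq4 x) + (-x/sq4 x)*Wr y : ℝ) : ℂ))) / (Bf y x)^2 /
              (Af y x / Bf y x)))) x := by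
    unfold Ff
    exact hD
  -- now rewrite the derivative
  have hS2 : ((sq4 x : ℝ) : ℂ)^2 = 4 - ((x:ℝ):ℂ)^2 := by
    exact_mod_cast congrArg (fun r : ℝ => (r:ℂ)) (sq4_sq hxIcc)
  have hW2 : ((Wr y : ℝ) : ℂ)^2 = 4 + ((y:ℝ):ℂ)^2 := by
    exact_mod_cast congrArg (fun r : ℝ => (r:ℂ)) (Wr_sq y)
  have hAeq : Af y x = (4 + 2*((sq4 x : ℝ):ℂ) - (2+((sq4 x : ℝ):ℂ))*((Wr y : ℝ):ℂ)) - (x:ℂ)*(y:ℂ)*I := by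
    unfold Af; push_cast; ring
  have hBeq : Bf y x = (x:ℂ)*(y:ℂ)*I - (4 + 2*((sq4 x : ℝ):ℂ) + (2+((sq4 x : ℝ):ℂ))*((Wr y : ℝ):ℂ)) := by
    unfold Bf; push_cast; ring
  have hS0 : ((sq4 x : ℝ):ℂ) ≠ 0 := by
    exact_mod_cast ne_of_gt hs0
  have hxz : (x:ℂ) - (y:ℂ)*I ≠ 0 := by
    intro h
    have := congrArg Complex.im h
    simp at this
    exact absurd this (ne_of_gt hy)
  have key := keyalg ((sq4 x : ℝ):ℂ) ((Wr y : ℝ):ℂ) (x:ℂ) (y:ℂ) (Af y x) (Bf y x)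
    hS2 hW2 hAeq hBeq hS0 hA0 hB0 hxz
  convert hFf using 1
  rw [mul_div_assoc]
  rw [← key]
  push_cast
  ring


lemma continuous_sq4 : Continuous sq4 :=
  Real.continuous_sqrt.comp (by continuity)

lemma continuous_Af (y : ℝ) : Continuous (Af y) := by
  unfold Af
  apply Continuous.sub
  · exact Complex.continuous_ofReal.comp
      ((continuous_const.add (continuous_const.mul continuous_sq4)).sub
        ((continuous_const.add continuous_sq4).mul continuous_const))
  · exact (Complex.continuous_ofReal.comp (by continuity)).mul continuous_const

lemma continuous_Bf (y : ℝ) : Continuous (Bf y) := by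
  unfold Bf
  apply Continuous.sub
  · exact (Complex.continuous_ofReal.comp (by continuity)).mul continuous_const
  · exact Complex.continuous_ofReal.comp
      ((continuous_const.add (continuous_const.mul continuous_sq4)).add
        ((continuous_const.add continuous_sq4).mul continuous_const))

lemma continuousOn_Ff {y : ℝ} (hy : 0 < y) : ContinuousOn (Ff y) (Set.Icc (-2:ℝ) 2) := by
  intro x hx
  apply ContinuousAt.continuousWithinAt
  unfold Ff
  apply ContinuousAt.mul continuousAt_const
  apply ContinuousAt.add
  · apply ContinuousAt.sub
    · exact (Complex.continuous_ofReal.comp continuous_sq4).continuousAt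
    · exact continuousAt_const.mul
        ((Complex.continuous_ofReal.comp (Real.continuous_arcsin.comp (by continuity))).continuousAt)
  · apply ContinuousAt.mul continuousAt_const
    have hrat : ContinuousAt (fun t : ℝ => Af y t / Bf y t) x :=
      ((continuous_Af y).continuousAt).div ((continuous_Bf y).continuousAt) (Bf_ne_zero hy x)
    exact ContinuousAt.comp (g := Complex.log) (continuousAt_clog (ratio_mem_slitPlane hy hx)) hrat

lemma continuous_integrand {y : ℝ} (hy : 0 < y) :
    Continuous (fun x : ℝ => ((rhoSC x : ℝ) : ℂ) / ((x:ℂ) - (y:ℂ)*I)) := by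
  apply Continuous.div
  · apply Complex.continuous_ofReal.comp
    unfold rhoSC
    exact continuous_const.mul (Real.continuous_sqrt.comp (by continuity))
  · continuity
  · intro x
    intro h
    have := congrArg Complex.im h
    simp at this
    exact absurd this (ne_of_gt hy)

lemma rho_eq {x : ℝ} (hx : x ∈ Set.Icc (-2:ℝ) 2) :
    ((rhoSC x : ℝ) : ℂ) = ((1/(2*Real.pi) : ℝ) : ℂ) * ((sq4 x : ℝ) : ℂ) := by
  obtain ⟨h1, h2⟩ := hx
  unfold rhoSC sq4
  rw [max_eq_left (by nlinarith)]
  push_cast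
  ring

lemma mSC_eq_interval {y : ℝ} (hy : 0 < y) :
    mSC ((y:ℂ)*I) = ∫ x in (-2:ℝ)..2, ((rhoSC x : ℝ) : ℂ) / ((x:ℂ) - (y:ℂ)*I) := by
  unfold mSC
  rw [intervalIntegral.integral_eq_integral_of_support_subset]
  intro x hx
  rw [Function.mem_support] at hx
  have hrho : rhoSC x ≠ 0 := by
    intro h
    apply hx
    rw [h]
    simp
  have hmax : max (4 - x^2) 0 ≠ 0 := by
    intro h
    apply hrho
    unfold rhoSC
    rw [h]
    simp
  have h4 : 0 < 4 - x^2 := by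
    rcases lt_or_ge 0 (4 - x^2) with h | h
    · exact h
    · exact absurd (max_eq_right h) hmax
  constructor
  · nlinarith
  · nlinarith

lemma ftc_Ff {y : ℝ} (hy : 0 < y) :
    ∫ x in (-2:ℝ)..2, ((rhoSC x : ℝ) : ℂ) / ((x:ℂ) - (y:ℂ)*I) = Ff y 2 - Ff y (-2) := by
  apply intervalIntegral.integral_eq_sub_of_hasDerivAt_of_le (by norm_num)
    (continuousOn_Ff hy)
  · intro x hx
    have hxIcc : x ∈ Set.Icc (-2:ℝ) 2 := Set.mem_Icc_of_Ioo hx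
    rw [rho_eq hxIcc, mul_div_assoc]
    have := hasDerivAt_Ff hy hx
    rwa [mul_div_assoc] at this
  · exact ((continuous_integrand hy).continuousOn).intervalIntegrable

lemma log_I_mul {r : ℝ} (hr : 0 < r) :
    Complex.log ((r:ℂ)*I) = ((Real.log r : ℝ) : ℂ) + ((Real.pi/2 : ℝ) : ℂ)*I := by
  apply Complex.ext
  · rw [Complex.log_re]
    simp [Complex.norm_real, abs_of_pos hr]
  · rw [Complex.log_im, Complex.arg_real_mul I hr, Complex.arg_I]
    simp

lemma log_neg_I_mul {r : ℝ} (hr : 0 < r) :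
    Complex.log (-((r:ℂ)*I)) = ((Real.log r : ℝ) : ℂ) - ((Real.pi/2 : ℝ) : ℂ)*I := by
  have : -((r:ℂ)*I) = (r:ℂ)*(-I) := by ring
  rw [this]
  apply Complex.ext
  · rw [Complex.log_re]
    simp [Complex.norm_real, abs_of_pos hr]
  · rw [Complex.log_im, Complex.arg_real_mul (-I) hr, Complex.arg_neg_I]
    simp

lemma Wr_add_two_ne {y : ℝ} (hy : 0 < y) : ((Wr y : ℝ) : ℂ) + 2 ≠ 0 := by
  have h2 := Wr_gt_two hy
  intro h
  have := congrArg Complex.re h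
  simp at this
  nlinarith

lemma ratio_two {y : ℝ} (hy : 0 < y) :
    Af y 2 / Bf y 2 = ((y/(Wr y + 2) : ℝ) : ℂ)*I := by
  rw [div_eq_iff (Bf_ne_zero hy 2)]
  unfold Af Bf
  rw [sq4_zero]
  have hW2 : ((Wr y : ℝ) : ℂ)^2 = 4 + ((y:ℝ):ℂ)^2 :=
    mod_cast congrArg (fun r : ℝ => (r:ℂ)) (Wr_sq y)
  have hne := Wr_add_two_ne hy
  push_cast
  field_simp
  linear_combination (-2:ℂ)*hW2 + (-2*(y:ℂ)^2)*Complex.I_sq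

lemma ratio_neg_two {y : ℝ} (hy : 0 < y) :
    Af y (-2) / Bf y (-2) = -(((y/(Wr y + 2) : ℝ) : ℂ)*I) := by
  rw [div_eq_iff (Bf_ne_zero hy (-2))]
  unfold Af Bf
  rw [sq4_zero']
  have hW2 : ((Wr y : ℝ) : ℂ)^2 = 4 + ((y:ℝ):ℂ)^2 :=
    mod_cast congrArg (fun r : ℝ => (r:ℂ)) (Wr_sq y)
  have hne := Wr_add_two_ne hy
  push_cast
  field_simp
  linear_combination (-2:ℂ)*hW2 + (-2*(y:ℂ)^2)*Complex.I_sq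

lemma Ff_sub {y : ℝ} (hy : 0 < y) :
    Ff y 2 - Ff y (-2) = (-((y:ℂ)*I) + ((Wr y : ℝ):ℂ)*I)/2 := by
  have hr : 0 < y/(Wr y + 2) := by
    have := Wr_gt_two hy
    positivity
  unfold Ff
  rw [sq4_zero, sq4_zero', ratio_two hy, ratio_neg_two hy,
    log_I_mul hr, log_neg_I_mul hr]
  rw [show ((2:ℝ)/2) = 1 by norm_num, show ((-2:ℝ)/2) = -1 by norm_num,
    Real.arcsin_one, Real.arcsin_neg_one]
  have hpi : (Real.pi : ℂ) ≠ 0 := mod_cast Real.pi_ne_zero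
  push_cast
  field_simp
  ring

lemma mSC_on_axis {y : ℝ} (hy : 0 < y) :
    mSC ((y:ℂ)*I) = (-((y:ℂ)*I) + ((Wr y : ℝ):ℂ)*I)/2 := by
  rw [mSC_eq_interval hy, ftc_Ff hy, Ff_sub hy]


/-- The upper half plane. -/
def UHP : Set ℂ := {z : ℂ | 0 < z.im}

lemma isOpen_UHP : IsOpen UHP := isOpen_lt continuous_const Complex.continuous_im

lemma rhoSC_eq_zero {x : ℝ} (hx : x ∉ Set.Icc (-2:ℝ) 2) : rhoSC x = 0 := by
  simp only [Set.mem_Icc, not_and_or, not_le] at hx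
  have : max (4 - x^2) 0 = 0 := by
    rcases hx with h | h
    · exact max_eq_right (by nlinarith)
    · exact max_eq_right (by nlinarith)
  unfold rhoSC
  rw [this]
  simp

lemma continuous_rhoSC : Continuous rhoSC :=
  continuous_const.mul (Real.continuous_sqrt.comp (by continuity))

lemma integrable_rhoSC : Integrable rhoSC := by
  apply continuous_rhoSC.integrable_of_hasCompactSupport
  apply HasCompactSupport.intro isCompact_Icc
  exact fun x hx => rhoSC_eq_zero hx

lemma rhoSC_nonneg (x : ℝ) : 0 ≤ rhoSC x := by
  unfold rhoSC
  positivity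

lemma sub_ne_zero_of_im {z : ℂ} (hz : 0 < z.im) (x : ℝ) : (x:ℂ) - z ≠ 0 := by
  intro h
  have h2 : ((x:ℂ) - z).im = 0 := by rw [h]; simp
  simp only [Complex.sub_im, Complex.ofReal_im, zero_sub, neg_eq_zero] at h2
  linarith

lemma norm_sub_ge {z : ℂ} (hz : 0 < z.im) (x : ℝ) : z.im ≤ ‖(x:ℂ) - z‖ := by
  have h1 : |((x:ℂ) - z).im| ≤ ‖(x:ℂ) - z‖ := Complex.abs_im_le_norm _
  have h2 : ((x:ℂ) - z).im = -z.im := by simp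
  rw [h2] at h1
  rwa [abs_neg, abs_of_pos hz] at h1

lemma mSC_differentiableOn : DifferentiableOn ℂ mSC UHP := by
  intro z hz
  apply DifferentiableAt.differentiableWithinAt
  have hz' : 0 < z.im := hz
  set ε : ℝ := z.im / 2 with hε
  have ε_pos : 0 < ε := by positivity
  have him : ∀ z' ∈ Metric.ball z ε, ε ≤ z'.im := by
    intro z' hz'
    rw [Metric.mem_ball] at hz'
    rw [Complex.dist_eq] at hz'
    have h1 : |(z' - z).im| ≤ ‖z' - z‖ := Complex.abs_im_le_norm _
    have h2 : |z'.im - z.im| < ε := by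
      rw [Complex.sub_im] at h1
      exact lt_of_le_of_lt h1 hz'
    have h3 := (abs_lt.mp h2).1
    rw [hε] at *
    linarith
  have him' : ∀ z' ∈ Metric.ball z ε, 0 < z'.im := fun z' h => lt_of_lt_of_le ε_pos (him z' h)
  have key := hasDerivAt_integral_of_dominated_loc_of_deriv_le (μ := volume)
    (F := fun z' (x : ℝ) => (rhoSC x : ℂ) / ((x:ℂ) - z'))
    (F' := fun z' (x : ℝ) => (rhoSC x : ℂ) / ((x:ℂ) - z')^2)
    (x₀ := z) (bound := fun x => rhoSC x / ε^2) (Metric.ball_mem_nhds z ε_pos) ?_ ?_ ?_ ?_ ?_ ?_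
  · exact key.2.differentiableAt
  · -- measurability eventually
    apply Filter.eventually_of_mem (Metric.ball_mem_nhds z ε_pos)
    intro z' hmem
    apply Continuous.aestronglyMeasurable
    apply Continuous.div
    · exact Complex.continuous_ofReal.comp continuous_rhoSC
    · continuity
    · exact fun x => sub_ne_zero_of_im (him' z' hmem) x
  · -- integrability at z
    apply Continuous.integrable_of_hasCompactSupport
    · apply Continuous.div
      · exact Complex.continuous_ofReal.comp continuous_rhoSC
      · continuity
      · exact fun x => sub_ne_zero_of_im hz' x
    · apply HasCompactSupport.intro isCompact_Icc
      intro x hx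
      rw [rhoSC_eq_zero hx]
      simp
  · -- measurability of F' z
    apply Continuous.aestronglyMeasurable
    apply Continuous.div
    · exact Complex.continuous_ofReal.comp continuous_rhoSC
    · continuity
    · exact fun x => pow_ne_zero 2 (sub_ne_zero_of_im hz' x)
  · -- bound
    apply Filter.Eventually.of_forall
    intro x z' hmem
    have h0 : 0 < z'.im := him' z' hmem
    rw [norm_div, norm_pow]
    have hge : ε ≤ ‖(x:ℂ) - z'‖ := le_trans (him z' hmem) (norm_sub_ge h0 x)
    have h1 : ε^2 ≤ ‖(x:ℂ) - z'‖^2 := by nlinarith [norm_nonneg ((x:ℂ) - z')]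
    have h2 : ‖((rhoSC x : ℝ):ℂ)‖ = rhoSC x := by
      rw [Complex.norm_real, Real.norm_eq_abs, _root_.abs_of_nonneg (rhoSC_nonneg x)]
    rw [h2]
    apply div_le_div_of_nonneg_left (rhoSC_nonneg x) (by positivity) h1
  · -- bound integrable
    exact integrable_rhoSC.div_const _
  · -- differentiability in z'
    apply Filter.Eventually.of_forall
    intro x z' hmem
    have hne : (x:ℂ) - z' ≠ 0 := sub_ne_zero_of_im (him' z' hmem) x
    have hsub : HasDerivAt (fun w : ℂ => (x:ℂ) - w) (-1) z' := by
      simpa using (hasDerivAt_id z').const_sub (x:ℂ)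
    have hinv := hsub.inv hne
    have := hinv.const_mul ((rhoSC x : ℝ):ℂ)
    simp only [div_eq_mul_inv]
    refine this.congr_deriv ?_
    field_simp


/-- The explicit formula. -/
noncomputable def gSC (z : ℂ) : ℂ := (-z + I * (4 - z^2) ^ ((1:ℂ)/2)) / 2

lemma slit4 {z : ℂ} (hz : 0 < z.im) : 4 - z^2 ∈ Complex.slitPlane := by
  rw [Complex.mem_slitPlane_iff]
  have hre : (4 - z^2).re = 4 - (z.re*z.re - z.im*z.im) := by
    simp [pow_two, Complex.mul_re]
  have him : (4 - z^2).im = -(z.re*z.im + z.im*z.re) := by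
    simp [pow_two, Complex.mul_im]
  rcases eq_or_ne z.re 0 with h0 | h0
  · left
    rw [hre, h0]
    nlinarith
  · right
    rw [him]
    intro h
    have : z.re * z.im = 0 := by linarith [h]
    rcases mul_eq_zero.mp this with h | h
    · exact h0 h
    · linarith

lemma four_sub_sq_ne {z : ℂ} (hz : 0 < z.im) : 4 - z^2 ≠ 0 :=
  Complex.slitPlane_ne_zero (slit4 hz)

lemma gSC_differentiableOn : DifferentiableOn ℂ gSC UHP := by
  intro z hz
  apply DifferentiableAt.differentiableWithinAt
  have h1 : HasDerivAt (fun w : ℂ => 4 - w^2) (-(2*z)) z := by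
    simpa using (hasDerivAt_pow 2 z).const_sub 4
  have h2 := (h1.cpow_const (c := (1:ℂ)/2) (slit4 hz)).const_mul I
  have h3 := ((hasDerivAt_id z).neg.add h2).div_const 2
  exact h3.differentiableAt

lemma sqrt_cpow {y : ℝ} (hy : 0 < y) :
    ((4:ℂ) - ((y:ℂ)*I)^2) ^ ((1:ℂ)/2) = ((Wr y : ℝ) : ℂ) := by
  have h1 : ((4:ℂ) - ((y:ℂ)*I)^2) = (((4 + y^2 : ℝ)) : ℂ) := by
    push_cast
    rw [mul_pow, Complex.I_sq]
    ring
  rw [h1]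
  have h2 : ((1:ℂ)/2) = (((1/2 : ℝ)) : ℂ) := by norm_num
  rw [h2, ← Complex.ofReal_cpow (by positivity : (0:ℝ) ≤ 4 + y^2)]
  rw [Wr, Real.sqrt_eq_rpow]

lemma gSC_on_axis {y : ℝ} (hy : 0 < y) :
    gSC ((y:ℂ)*I) = (-((y:ℂ)*I) + ((Wr y : ℝ):ℂ)*I)/2 := by
  unfold gSC
  rw [sqrt_cpow hy]
  ring

lemma mSC_eq_gSC : Set.EqOn mSC gSC UHP := by
  have hm : AnalyticOnNhd ℂ mSC UHP := mSC_differentiableOn.analyticOnNhd isOpen_UHP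
  have hg : AnalyticOnNhd ℂ gSC UHP := gSC_differentiableOn.analyticOnNhd isOpen_UHP
  have hconn : IsPreconnected UHP := (convex_halfSpace_im_gt 0).isPreconnected
  have hI : I ∈ UHP := by simp [UHP]
  apply hm.eqOn_of_preconnected_of_frequently_eq hg hconn hI
  have htend : Filter.Tendsto (fun t : ℝ => (t:ℂ)*I) (nhdsWithin 1 (Set.Ioi 1)) (nhdsWithin I {I}ᶜ) := by
    rw [tendsto_nhdsWithin_iff]
    constructor
    · have : Filter.Tendsto (fun t : ℝ => (t:ℂ)*I) (nhds 1) (nhds ((1:ℝ)*I)) := by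
        apply Filter.Tendsto.mul_const
        exact Complex.continuous_ofReal.continuousAt
      rw [show ((1:ℝ):ℂ)*I = I by simp] at this
      exact this.mono_left nhdsWithin_le_nhds
    · apply Filter.eventually_of_mem self_mem_nhdsWithin
      intro t ht
      simp only [Set.mem_compl_iff, Set.mem_singleton_iff]
      intro h
      have : (t:ℂ)*I = (1:ℝ)*I := by simpa using h
      have ht1 : (t:ℝ) = 1 := by
        have := mul_right_cancel₀ Complex.I_ne_zero this
        exact_mod_cast this
      rw [Set.mem_Ioi] at ht
      linarith
  apply htend.frequently
  apply Filter.Eventually.frequently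
  apply Filter.eventually_of_mem self_mem_nhdsWithin
  intro t ht
  rw [Set.mem_Ioi] at ht
  have ht0 : 0 < t := by linarith
  rw [mSC_on_axis ht0, gSC_on_axis ht0]


lemma re_cpow_half_pos {c : ℂ} (hc : c ∈ Complex.slitPlane) :
    0 < (c ^ ((1:ℂ)/2)).re := by
  have hc0 : c ≠ 0 := Complex.slitPlane_ne_zero hc
  rw [Complex.cpow_def_of_ne_zero hc0, Complex.exp_re]
  apply mul_pos (Real.exp_pos _)
  have him : (Complex.log c * ((1:ℂ)/2)).im = c.arg / 2 := by
    simp [Complex.mul_im, Complex.log_im, Complex.log_re]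
    ring
  rw [him]
  apply Real.cos_pos_of_mem_Ioo
  constructor
  · have := Complex.neg_pi_lt_arg c
    linarith
  · have h1 := Complex.arg_le_pi c
    have h2 : c.arg ≠ Real.pi := by
      intro h
      rw [Complex.arg_eq_pi_iff] at h
      rw [Complex.mem_slitPlane_iff] at hc
      rcases hc with h3 | h3
      · linarith [h.1]
      · exact h3 h.2
    have := lt_of_le_of_ne h1 h2
    linarith

end SCAux

/-- The Stieltjes transform of the semicircle law satisfies the self-consistent equation
`m + 1/m + z = 0` on the upper half plane, and is given by `m(z) = (−z + √(z²−4))/2`,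
where the branch of the square root is the one with positive imaginary part
(equivalently, the branch with `√(z²−4) ∼ z` as `z → ∞`). -/
theorem stieltjes_transform_semicircle (z : ℂ) (hz : 0 < z.im) :
    mSC z + 1 / mSC z + z = 0 ∧
      ∃ w : ℂ, w ^ 2 = z ^ 2 - 4 ∧ 0 < w.im ∧ mSC z = (-z + w) / 2 := by
  set w : ℂ := Complex.I * (4 - z^2) ^ ((1:ℂ)/2) with hw
  have hzU : z ∈ SCAux.UHP := hz
  have h4 : (4:ℂ) - z^2 ≠ 0 := SCAux.four_sub_sq_ne hz
  have hw2 : w^2 = z^2 - 4 := by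
    rw [hw, mul_pow, Complex.I_sq, pow_two, ← Complex.cpow_add _ _ h4]
    norm_num
  have hwim : 0 < w.im := by
    have h := SCAux.re_cpow_half_pos (SCAux.slit4 hz)
    rw [hw, Complex.mul_im, Complex.I_re, Complex.I_im]
    linarith
  have hm : mSC z = (-z + w) / 2 := by
    have := SCAux.mSC_eq_gSC hzU
    rw [this]
    rfl
  have hm0 : mSC z ≠ 0 := by
    rw [hm]
    intro h
    have hzw : w = z := by
      have h2 : -z + w = 0 := by
        field_simp at h
        linear_combination h
      linear_combination h2
    rw [hzw] at hw2
    have : (4:ℂ) = 0 := by linear_combination hw2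
    norm_num at this
  refine ⟨?_, w, hw2, hwim, hm⟩
  have hnum : -z + w ≠ 0 := by
    intro h
    apply hm0
    rw [hm, h]
    simp
  rw [hm]
  field_simp
  linear_combination hw2
end

section
/- Discrete critical Gagliardo–Nirenberg inequality: there exists a constant C > 0 such that for every finitely supported function f : ℤ → ℝ, ‖f‖₄⁴ ≤ C·‖f‖₂²·Σ_{i ≠ j} |f_i − f_j|²/(i − j)², where ‖f‖_p^p = Σ_i |f_i|^p. -/
set_option maxHeartbeats 1000000

/-- Discrete critical Gagliardo–Nirenberg inequality: there exists `C > 0` such that for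
every finitely supported `f : ℤ → ℝ`,
`‖f‖₄⁴ ≤ C·‖f‖₂²·Σ_{i ≠ j} |f_i − f_j|²/(i − j)²`. -/
theorem discrete_gagliardo_nirenberg :
    ∃ C : ℝ, 0 < C ∧
      ∀ f : ℤ → ℝ, (Function.support f).Finite →
        ∑' i : ℤ, f i ^ 4 ≤
          C * (∑' i : ℤ, f i ^ 2) *
            ∑' p : ℤ × ℤ,
              if p.1 ≠ p.2 then (f p.1 - f p.2) ^ 2 / ((p.1 : ℝ) - (p.2 : ℝ)) ^ 2 else 0 := by
  refine ⟨100, by norm_num, ?_⟩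
  intro f hsupp
  set g : ℤ × ℤ → ℝ := fun p =>
    if p.1 ≠ p.2 then (f p.1 - f p.2) ^ 2 / ((p.1 : ℝ) - (p.2 : ℝ)) ^ 2 else 0 with hgdef
  have hg0 : ∀ p, 0 ≤ g p := by
    intro p
    simp only [hgdef]
    split
    · positivity
    · exact le_rfl
  -- Summability of f^2 and f^4
  have hf2 : Summable fun i => f i ^ 2 := by
    apply summable_of_finite_support
    apply hsupp.subset
    intro i hi
    simp only [Function.mem_support] at hi ⊢
    intro h; apply hi; rw [h]; ring
  have hf4 : Summable fun i => f i ^ 4 := by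
    apply summable_of_finite_support
    apply hsupp.subset
    intro i hi
    simp only [Function.mem_support] at hi ⊢
    intro h; apply hi; rw [h]; ring
  -- Summability of g
  set u : ℤ → ℝ := fun k => 1 / (k : ℝ) ^ 2 with hudef
  have hu : Summable u := Real.summable_one_div_int_pow.mpr one_lt_two
  have hu0 : ∀ k, 0 ≤ u k := fun k => by positivity
  have h1 : Summable fun p : ℤ × ℤ => 2 * f p.1 ^ 2 * u (p.1 - p.2) := by
    have hbase : Summable fun p : ℤ × ℤ => (2 * f p.1 ^ 2) * u p.2 :=
      (hf2.mul_left 2).mul_of_nonneg hu (fun i => by positivity) hu0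
    have hinj : Function.Injective (fun p : ℤ × ℤ => (p.1, p.1 - p.2)) := by
      intro p q h
      simp only [Prod.mk.injEq] at h
      exact Prod.ext h.1 (by omega)
    exact (hbase.comp_injective hinj).congr (fun p => rfl)
  have h2 : Summable fun p : ℤ × ℤ => 2 * f p.2 ^ 2 * u (p.1 - p.2) := by
    have hbase : Summable fun p : ℤ × ℤ => u p.1 * (2 * f p.2 ^ 2) :=
      hu.mul_of_nonneg (hf2.mul_left 2) hu0 (fun i => by positivity)
    have hinj : Function.Injective (fun p : ℤ × ℤ => (p.1 - p.2, p.2)) := by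
      intro p q h
      simp only [Prod.mk.injEq] at h
      exact Prod.ext (by omega) h.2
    exact (hbase.comp_injective hinj).congr (fun p => by simp; ring)
  have hgsum : Summable g := by
    apply Summable.of_nonneg_of_le hg0 _ (h1.add h2)
    intro p
    by_cases hp : p.1 = p.2
    · simp only [hgdef, hudef, hp]
      simp
    · have hc : ((p.1 : ℝ) - (p.2 : ℝ)) ≠ 0 := by
        intro h
        apply hp
        exact_mod_cast sub_eq_zero.mp h
      have hup : u (p.1 - p.2) = 1 / ((p.1 : ℝ) - (p.2 : ℝ)) ^ 2 := by
        simp only [hudef]; push_cast; ring_nf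
      simp only [hgdef, if_pos hp, hup]
      rw [div_eq_mul_one_div]
      have hsq : (f p.1 - f p.2) ^ 2 ≤ 2 * f p.1 ^ 2 + 2 * f p.2 ^ 2 := by
        nlinarith [sq_nonneg (f p.1 + f p.2)]
      have hpos : 0 ≤ 1 / ((p.1 : ℝ) - (p.2 : ℝ)) ^ 2 := by positivity
      nlinarith [mul_le_mul_of_nonneg_right hsq hpos]
  obtain ⟨hrow, houter⟩ := (summable_prod_of_nonneg hg0).mp hgsum
  set d : ℤ → ℝ := fun i => ∑' j, g (i, j) with hddef
  have hd0 : ∀ i, 0 ≤ d i := fun i => tsum_nonneg (fun j => hg0 (i, j))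
  set A : ℝ := ∑' i, f i ^ 2 with hAdef
  have hA0 : 0 ≤ A := tsum_nonneg (fun i => sq_nonneg _)
  have hDeq : ∑' p : ℤ × ℤ, g p = ∑' i, d i := hgsum.tsum_prod' hrow
  -- window inequality
  have hwin : ∀ i : ℤ, ∀ L : ℕ, 1 ≤ L →
      (L : ℝ) * f i ^ 2 ≤ 2 * A + 2 * (L : ℝ) ^ 2 * d i := by
    intro i L hL
    set s : Finset ℤ := (Finset.Icc (1 : ℤ) (L : ℤ)).image (fun k => i + k) with hsdef
    have hcard : s.card = L := by
      rw [hsdef, Finset.card_image_of_injective _ (add_right_injective i), Int.card_Icc]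
      omega
    have hterm : ∀ j ∈ s, f i ^ 2 ≤ 2 * f j ^ 2 + 2 * (L : ℝ) ^ 2 * g (i, j) := by
      intro j hj
      obtain ⟨k, hk, rfl⟩ := Finset.mem_image.mp hj
      rw [Finset.mem_Icc] at hk
      have hne : i ≠ i + k := by omega
      have hgval : g (i, i + k) = (f i - f (i + k)) ^ 2 / (k : ℝ) ^ 2 := by
        simp only [hgdef, if_pos hne]
        congr 1
        push_cast
        ring
      have hkpos : (0 : ℝ) < (k : ℝ) ^ 2 := by
        have : (0:ℤ) < k := by omega
        positivity
      have hkL : (k : ℝ) ^ 2 ≤ (L : ℝ) ^ 2 := by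
        have h1 : (0:ℝ) ≤ (k : ℝ) := by exact_mod_cast (by omega : (0:ℤ) ≤ k)
        have h2 : (k : ℝ) ≤ (L : ℝ) := by exact_mod_cast hk.2
        nlinarith
      have hdiff : (f i - f (i + k)) ^ 2 ≤ (L : ℝ) ^ 2 * g (i, i + k) := by
        rw [hgval]
        rw [div_eq_mul_one_div]
        have : (f i - f (i + k)) ^ 2 * (1 / (k:ℝ)^2) * (k:ℝ)^2 = (f i - f (i+k))^2 := by
          have hk0 : (k:ℝ) ≠ 0 := by exact_mod_cast (show k ≠ 0 by omega)
          field_simp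
        nlinarith [mul_le_mul_of_nonneg_left hkL (le_of_lt (by positivity :
          (0:ℝ) < (f i - f (i+k))^2 * (1/(k:ℝ)^2) + 1))]
      nlinarith [sq_nonneg (f i - 2 * f (i + k)), hdiff]
    have hsum1 : ∑ j ∈ s, f j ^ 2 ≤ A :=
      Summable.sum_le_tsum s (fun j _ => sq_nonneg _) hf2
    have hsum2 : ∑ j ∈ s, g (i, j) ≤ d i :=
      Summable.sum_le_tsum s (fun j _ => hg0 (i, j)) (hrow i)
    calc (L : ℝ) * f i ^ 2 = ∑ _j ∈ s, f i ^ 2 := by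
          rw [Finset.sum_const, hcard]; ring
      _ ≤ ∑ j ∈ s, (2 * f j ^ 2 + 2 * (L : ℝ) ^ 2 * g (i, j)) := Finset.sum_le_sum hterm
      _ = 2 * ∑ j ∈ s, f j ^ 2 + 2 * (L : ℝ) ^ 2 * ∑ j ∈ s, g (i, j) := by
          rw [Finset.sum_add_distrib, ← Finset.mul_sum, ← Finset.mul_sum]
      _ ≤ 2 * A + 2 * (L : ℝ) ^ 2 * d i := by
          have h2L : (0:ℝ) ≤ 2 * (L : ℝ) ^ 2 := by positivity
          nlinarith [mul_le_mul_of_nonneg_left hsum2 h2L]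
  -- pointwise key bound
  have key : ∀ i : ℤ, f i ^ 4 ≤ 100 * A * d i := by
    intro i
    by_cases hfi : f i = 0
    · rw [hfi]
      have := hd0 i
      nlinarith
    have hfiA : f i ^ 2 ≤ A := Summable.le_tsum hf2 i (fun j _ => sq_nonneg _)
    have hApos : 0 < A := lt_of_lt_of_le (by positivity) hfiA
    have hdpos : 0 < d i := by
      have hinf : ((Function.support f ∪ {i} : Set ℤ)ᶜ).Infinite :=
        Set.Finite.infinite_compl (hsupp.union (Set.finite_singleton i))
      obtain ⟨j, hj⟩ := hinf.nonempty
      simp only [Set.mem_compl_iff, Set.mem_union, Set.mem_singleton_iff,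
        Function.mem_support, not_or, not_not] at hj
      have hji : i ≠ j := fun h => hj.2 h.symm
      have hcne : ((i : ℝ) - (j : ℝ)) ≠ 0 := by
        intro h
        exact hji (by exact_mod_cast sub_eq_zero.mp h)
      have hgpos : 0 < g (i, j) := by
        simp only [hgdef, if_pos hji, hj.1, sub_zero]
        positivity
      exact lt_of_lt_of_le hgpos (Summable.le_tsum (hrow i) j (fun k _ => hg0 (i, k)))
    rcases le_or_gt A (d i) with hAd | hAd
    · nlinarith [mul_le_mul hfiA hfiA (sq_nonneg (f i)) hA0, sq_nonneg (f i)]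
    · set x : ℝ := Real.sqrt (A / d i) with hxdef
      have hx0 : 0 < x := Real.sqrt_pos.mpr (by positivity)
      have hx2 : x ^ 2 = A / d i := Real.sq_sqrt (by positivity)
      have hxd : x ^ 2 * d i = A := by rw [hx2]; field_simp
      have hx1 : 1 < x := by nlinarith [(one_lt_div hdpos).mpr hAd]
      set L : ℕ := ⌈x⌉₊ with hLdef
      have hL1 : 1 ≤ L := Nat.one_le_iff_ne_zero.mpr (by
        intro h
        have := Nat.le_ceil x
        rw [← hLdef, h] at this
        push_cast at this
        linarith)
      have hLx : x ≤ (L : ℝ) := Nat.le_ceil x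
      have hLx2 : (L : ℝ) < x + 1 := Nat.ceil_lt_add_one hx0.le
      have hw := hwin i L hL1
      have hL2x : (L : ℝ) < 2 * x := by linarith
      have hLsq : (L : ℝ) ^ 2 * d i < 4 * A := by
        have hsq : (L : ℝ) ^ 2 < 4 * x ^ 2 := by nlinarith [hx0, hLx, hx1]
        nlinarith [mul_lt_mul_of_pos_right hsq hdpos, hxd]
      have h10 : (L : ℝ) * f i ^ 2 ≤ 10 * A := by nlinarith
      have hxf : x * f i ^ 2 ≤ 10 * A := by
        nlinarith [mul_le_mul_of_nonneg_right hLx (sq_nonneg (f i))]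
      have hstep : A * (f i ^ 2 * f i ^ 2) ≤ 100 * A ^ 2 * d i := by
        calc A * (f i ^ 2 * f i ^ 2) = (x * f i ^ 2) * (x * f i ^ 2) * d i := by
              rw [← hxd]; ring
          _ ≤ (10 * A) * (10 * A) * d i := by
              apply mul_le_mul_of_nonneg_right _ hdpos.le
              exact mul_le_mul hxf hxf (by positivity) (by positivity)
          _ = 100 * A ^ 2 * d i := by ring
      nlinarith [hstep, hApos]
  -- conclude
  have hsumd : Summable fun i => 100 * A * d i := houter.mul_left _
  calc ∑' i : ℤ, f i ^ 4 ≤ ∑' i : ℤ, 100 * A * d i := Summable.tsum_le_tsum key hf4 hsumd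
    _ = 100 * A * ∑' i, d i := tsum_mul_left
    _ = 100 * A * ∑' p : ℤ × ℤ, g p := by rw [hDeq]
end

section
/- Level repulsion via truncated moments: suppose a random variable X ≥ 0 and a tilted measure ν satisfying P^μ(X ≤ t) = E^ν[1(X ≤ t)X^β]/E^ν[X^β] for all t. If P^ν(X ≤ t) ≤ C·K·t·log N for all t > 0 and P^ν(X ≥ c/(K log N)) ≥ 1/2, then P^μ(X ≤ s) ≤ C′·(K s log N)^{β+1} for all s > 0, with C′ depending only on C, c, β. -/
open MeasureTheory

/-- Level repulsion via truncated moments: suppose `X ≥ 0` and a tilted probability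
measure `ν` satisfy `P^μ(X ≤ t)·E^ν[X^β] = E^ν[1(X ≤ t)X^β]` for all `t`. If
`P^ν(X ≤ t) ≤ C·K·t·log N` for all `t > 0` and `P^ν(X ≥ c/(K log N)) ≥ 1/2`, then
`P^μ(X ≤ s) ≤ C′·(K s log N)^{β+1}` for all `s > 0`, with `C′` depending only on
`C, c, β`. -/
theorem level_repulsion_truncated_moments (C c β : ℝ) (hC : 0 < C) (hc : 0 < c)
    (hβ : 0 < β) :
    ∃ C' : ℝ, 0 < C' ∧
      ∀ (Ω : Type) (_ : MeasurableSpace Ω) (μ ν : Measure Ω),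
        IsProbabilityMeasure μ → IsProbabilityMeasure ν →
        ∀ X : Ω → ℝ, Measurable X → (∀ ω, 0 ≤ X ω) →
        ∀ K N : ℝ, 0 < K → 1 < N →
        Integrable (fun ω => X ω ^ β) ν →
        (∀ t : ℝ, (μ {ω | X ω ≤ t}).toReal * (∫ ω, X ω ^ β ∂ν)
            = ∫ ω in {ω | X ω ≤ t}, X ω ^ β ∂ν) →
        (∀ t : ℝ, 0 < t → (ν {ω | X ω ≤ t}).toReal ≤ C * K * t * Real.log N) →
        ((1 : ℝ) / 2 ≤ (ν {ω | c / (K * Real.log N) ≤ X ω}).toReal) →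
        ∀ s : ℝ, 0 < s →
          (μ {ω | X ω ≤ s}).toReal ≤ C' * (K * s * Real.log N) ^ (β + 1) := by
  refine ⟨2 * C / c ^ β, by positivity, ?_⟩
  intro Ω mΩ μ ν hμ hν X hX hX0 K N hK hN hint hId hup hlow s hs
  set L := Real.log N with hL
  have hL0 : 0 < L := Real.log_pos hN
  set a : ℝ := c / (K * L) with ha
  have ha0 : 0 < a := by positivity
  set M : ℝ := ∫ ω, X ω ^ β ∂ν with hM
  -- lower bound on M
  have hSmeas : MeasurableSet {ω | a ≤ X ω} := measurableSet_le measurable_const hX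
  have hMlow : (1 / 2 : ℝ) * a ^ β ≤ M := by
    have h1 : ∫ ω in {ω | a ≤ X ω}, a ^ β ∂ν ≤ ∫ ω in {ω | a ≤ X ω}, X ω ^ β ∂ν := by
      refine setIntegral_mono_on (integrableOn_const (measure_lt_top ν _).ne)
        hint.integrableOn hSmeas ?_
      intro x hx
      exact Real.rpow_le_rpow ha0.le hx hβ.le
    have h2 : ∫ ω in {ω | a ≤ X ω}, X ω ^ β ∂ν ≤ M := by
      refine setIntegral_le_integral hint ?_
      filter_upwards with ω using Real.rpow_nonneg (hX0 ω) β
    have h3 : ∫ ω in {ω | a ≤ X ω}, a ^ β ∂ν = (ν {ω | a ≤ X ω}).toReal * a ^ β := by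
      rw [setIntegral_const, smul_eq_mul, mul_comm]; exact mul_comm _ _
    have haβ : 0 ≤ a ^ β := by positivity
    nlinarith [mul_le_mul_of_nonneg_right hlow haβ]
  -- upper bound on truncated integral
  have hTmeas : MeasurableSet {ω | X ω ≤ s} := measurableSet_le hX measurable_const
  have hUp : ∫ ω in {ω | X ω ≤ s}, X ω ^ β ∂ν ≤ s ^ β * (C * K * s * L) := by
    have h1 : ∫ ω in {ω | X ω ≤ s}, X ω ^ β ∂ν ≤ ∫ ω in {ω | X ω ≤ s}, s ^ β ∂ν := by
      refine setIntegral_mono_on hint.integrableOn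
        (integrableOn_const (measure_lt_top ν _).ne) hTmeas ?_
      intro x hx
      exact Real.rpow_le_rpow (hX0 x) hx hβ.le
    have h2 : ∫ ω in {ω | X ω ≤ s}, s ^ β ∂ν = (ν {ω | X ω ≤ s}).toReal * s ^ β := by
      rw [setIntegral_const, smul_eq_mul, mul_comm]; exact mul_comm _ _
    have hsβ : 0 ≤ s ^ β := by positivity
    nlinarith [mul_le_mul_of_nonneg_right (hup s hs) hsβ]
  -- algebra
  have key : s ^ β * (C * K * s * L) = (2 * C / c ^ β) * (K * s * L) ^ (β + 1) * (1 / 2 * a ^ β) := by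
    have hKsL : (K * s * L) ≠ 0 := by positivity
    rw [Real.rpow_add_one hKsL, ha, Real.div_rpow hc.le (by positivity),
      Real.mul_rpow hK.le hL0.le,
      Real.mul_rpow (by positivity : (0:ℝ) ≤ K * s) hL0.le,
      Real.mul_rpow hK.le hs.le]
    have h1 : (0:ℝ) < c ^ β := Real.rpow_pos_of_pos hc β
    have h2 : (0:ℝ) < K ^ β := Real.rpow_pos_of_pos hK β
    have h3 : (0:ℝ) < L ^ β := Real.rpow_pos_of_pos hL0 β
    field_simp
  have hμ0 : 0 ≤ (μ {ω | X ω ≤ s}).toReal := ENNReal.toReal_nonneg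
  have hMpos : 0 < (1 / 2 : ℝ) * a ^ β := by positivity
  have hchain : (μ {ω | X ω ≤ s}).toReal * (1 / 2 * a ^ β)
      ≤ (2 * C / c ^ β) * (K * s * L) ^ (β + 1) * (1 / 2 * a ^ β) := by
    calc (μ {ω | X ω ≤ s}).toReal * (1 / 2 * a ^ β)
        ≤ (μ {ω | X ω ≤ s}).toReal * M := by
          exact mul_le_mul_of_nonneg_left hMlow hμ0
      _ = ∫ ω in {ω | X ω ≤ s}, X ω ^ β ∂ν := hId s
      _ ≤ s ^ β * (C * K * s * L) := hUp
      _ = _ := key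
  exact le_of_mul_le_mul_right hchain hMpos
end
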